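/- arXiv:1710.04755 — 2 statements merged into one kernel-verified Lean document; each statement's English description precedes it below -/
import Mathlib

section
/- Let R_opt be the unique real number R > 1 with (log R)^2 = 1/R, let f(R) = −1/R + 1/(R^2·(log R)^2), and let R_0 > R_opt. Then there exists a function R : ℝ → ℝ with R(0) = R_0 such that for every t ≥ 0 the function R is differentiable at t with derivative f(R(t)); moreover R is strictly decreasing on [0, ∞), satisfies R_opt < R(t) ≤ R_0 for all t ≥ 0, and R(t) converges to R_opt as t → ∞. -/
open Real Set Filter intervalIntegral

private lemma psi_hasDerivAt {x : ℝ} (hx : 0 < x) :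
    HasDerivAt (fun r : ℝ => r * (Real.log r) ^ 2) ((Real.log x) ^ 2 + 2 * Real.log x) x := by
  have h1 : HasDerivAt (fun r : ℝ => (Real.log r) ^ 2) ((2 : ℕ) * (Real.log x) ^ 1 * x⁻¹) x :=
    (Real.hasDerivAt_log hx.ne').pow 2
  have h := (hasDerivAt_id x).mul h1
  convert h using 1
  exacts [rfl, rfl, rfl, by simp only [id, pow_one, Nat.cast_ofNat]; field_simp]

private lemma psi_gt {Ropt : ℝ} (hRopt : 1 < Ropt)
    (hroot : (Real.log Ropt) ^ 2 = 1 / Ropt) {r : ℝ} (hr : Ropt < r) :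
    1 < r * (Real.log r) ^ 2 := by
  have h0 : (0:ℝ) < Ropt := lt_trans one_pos hRopt
  have hpsiR : Ropt * (Real.log Ropt) ^ 2 = 1 := by
    rw [hroot]; field_simp
  have hmono : StrictMonoOn (fun r : ℝ => r * (Real.log r) ^ 2) (Set.Ici Ropt) := by
    apply strictMonoOn_of_deriv_pos (convex_Ici Ropt)
    · intro x hx
      exact ((psi_hasDerivAt (lt_of_lt_of_le h0 hx)).continuousAt).continuousWithinAt
    · intro x hx
      rw [interior_Ici] at hx
      have hx1 : 1 < x := lt_trans hRopt hx
      have hx0 : 0 < x := lt_trans one_pos hx1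
      rw [(psi_hasDerivAt hx0).deriv]
      have hlog : 0 < Real.log x := Real.log_pos hx1
      positivity
  have := hmono (Set.self_mem_Ici) (Set.mem_Ici.mpr hr.le) hr
  simpa [hpsiR] using this

/-- For `R_opt` the unique root `> 1` of `(log R)^2 = 1/R`,
`f(R) = -1/R + 1/(R^2 (log R)^2)`, and an initial radius `R_0 > R_opt`, there is a
global solution `R(t)` of the ODE `R' = f(R)`, `R(0) = R_0`, which is strictly
decreasing on `[0, ∞)`, stays in `(R_opt, R_0]`, and converges to `R_opt` as
`t → ∞`. -/
theorem radial_flow_from_above (Ropt : ℝ) (hRopt : 1 < Ropt)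
    (hroot : (Real.log Ropt) ^ 2 = 1 / Ropt)
    (f : ℝ → ℝ) (hf : ∀ R : ℝ, f R = -1 / R + 1 / (R ^ 2 * (Real.log R) ^ 2))
    (R₀ : ℝ) (hR₀ : Ropt < R₀) :
    ∃ R : ℝ → ℝ, R 0 = R₀ ∧
      (∀ t : ℝ, 0 ≤ t → HasDerivAt R (f (R t)) t) ∧
      StrictAntiOn R (Set.Ici (0 : ℝ)) ∧
      (∀ t : ℝ, 0 ≤ t → Ropt < R t ∧ R t ≤ R₀) ∧
      Filter.Tendsto R Filter.atTop (nhds Ropt) := by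
  have h0R : (0:ℝ) < Ropt := lt_trans one_pos hRopt
  -- the explicit formula for f on (1, ∞)
  have hfval : ∀ r : ℝ, 1 < r →
      f r = -((r * Real.log r ^ 2 - 1) / (r ^ 2 * Real.log r ^ 2)) := by
    intro r hr
    have hr0 : r ≠ 0 := (lt_trans one_pos hr).ne'
    have hl : Real.log r ≠ 0 := (Real.log_pos hr).ne'
    rw [hf]
    field_simp
    ring
  have hfneg : ∀ r : ℝ, Ropt < r → f r < 0 := by
    intro r hr
    have hr1 : 1 < r := lt_trans hRopt hr
    have hnum : 0 < r * Real.log r ^ 2 - 1 := sub_pos.mpr (psi_gt hRopt hroot hr)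
    have hlog : 0 < Real.log r := Real.log_pos hr1
    have hden : 0 < r ^ 2 * Real.log r ^ 2 := by positivity
    rw [hfval r hr1]
    exact neg_neg_iff_pos.mpr (div_pos hnum hden)
  set g : ℝ → ℝ := fun r => (-(f r))⁻¹ with hgdef
  have hgpos : ∀ r : ℝ, Ropt < r → 0 < g r :=
    fun r hr => inv_pos.mpr (neg_pos.mpr (hfneg r hr))
  have hfcont : ∀ r : ℝ, 1 < r → ContinuousAt f r := by
    intro r hr
    have hr0 : r ≠ 0 := (lt_trans one_pos hr).ne'
    have hl : Real.log r ≠ 0 := (Real.log_pos hr).ne'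
    have hden : r ^ 2 * Real.log r ^ 2 ≠ 0 := by positivity
    have h1 : ContinuousAt (fun R : ℝ => -1 / R + 1 / (R ^ 2 * (Real.log R) ^ 2)) r := by
      apply ContinuousAt.add
      · exact continuousAt_const.div continuousAt_id hr0
      · exact continuousAt_const.div
          ((continuousAt_id.pow 2).mul ((Real.continuousAt_log hr0).pow 2)) hden
    have hfeq : f = fun R : ℝ => -1 / R + 1 / (R ^ 2 * (Real.log R) ^ 2) := funext hf
    rw [hfeq]
    exact h1
  have hgcont : ∀ r : ℝ, Ropt < r → ContinuousAt g r := by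
    intro r hr
    exact ((hfcont r (lt_trans hRopt hr)).neg).inv₀ (neg_pos.mpr (hfneg r hr)).ne'
  have hgconton : ContinuousOn g (Set.Ioi Ropt) :=
    fun r hr => (hgcont r hr).continuousWithinAt
  have hgint : ∀ a b : ℝ, Ropt < a → Ropt < b → IntervalIntegrable g MeasureTheory.volume a b := by
    intro a b ha hb
    apply (hgconton.mono ?_).intervalIntegrable
    intro x hx
    exact lt_of_lt_of_le (lt_min ha hb) hx.1
  set F : ℝ → ℝ := fun r => ∫ s in r..R₀, g s with hFdef
  have hFderiv : ∀ r : ℝ, Ropt < r → HasDerivAt F (-(g r)) r := by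
    intro r hr
    have h1 : HasDerivAt (fun u => ∫ s in R₀..u, g s) (g r) r :=
      intervalIntegral.integral_hasDerivAt_right (hgint R₀ r hR₀ hr)
        ⟨Set.Ioi Ropt, Ioi_mem_nhds hr, hgconton.aestronglyMeasurable measurableSet_Ioi⟩
        (hgcont r hr)
    have heq : F = fun u => -∫ s in R₀..u, g s :=
      funext fun u => intervalIntegral.integral_symm R₀ u
    rw [heq]
    exact h1.neg
  have hFsub : ∀ a b : ℝ, Ropt < a → Ropt < b → F a - F b = ∫ s in a..b, g s := by
    intro a b ha hb
    have := intervalIntegral.integral_add_adjacent_intervals (hgint a b ha hb) (hgint b R₀ hb hR₀)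
    simp only [hFdef]
    linarith
  have hFanti : StrictAntiOn F (Set.Ioi Ropt) := by
    intro a ha b hb hab
    have hpos : 0 < ∫ s in a..b, g s :=
      intervalIntegral_pos_of_pos_on (hgint a b ha hb)
        (fun x hx => hgpos x (lt_trans ha hx.1)) hab
    have := hFsub a b ha hb
    linarith
  have hAnti : ∀ p q : ℝ, Ropt < p → Ropt < q → p ≤ q → F q ≤ F p := by
    intro p q hp hq hpq
    rcases hpq.eq_or_lt with rfl | h
    · exact le_refl _
    · exact (hFanti hp hq h).le
  have hFR0 : F R₀ = 0 := intervalIntegral.integral_same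
  -- g ≥ 1 on (Ropt, ∞)
  have hg1 : ∀ s : ℝ, Ropt < s → 1 ≤ g s := by
    intro s hs
    have hs1 : 1 < s := lt_trans hRopt hs
    have hs0 : 0 < s := lt_trans one_pos hs1
    have hl : 0 < Real.log s := Real.log_pos hs1
    have hub : -(f s) ≤ 1 := by
      rw [hf]
      have h1 : 0 < 1 / (s ^ 2 * Real.log s ^ 2) := by positivity
      have h2 : 1 / s < 1 := by
        rw [div_lt_one hs0]; exact hs1
      have : -(-1 / s + 1 / (s ^ 2 * Real.log s ^ 2)) = 1 / s - 1 / (s ^ 2 * Real.log s ^ 2) := by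
        ring
      rw [this]
      linarith
    have hp : 0 < -(f s) := neg_pos.mpr (hfneg s hs)
    calc (1:ℝ) = (-(f s))⁻¹ * (-(f s)) := (inv_mul_cancel₀ hp.ne').symm
      _ ≤ (-(f s))⁻¹ * 1 := mul_le_mul_of_nonneg_left hub (inv_pos.mpr hp).le
      _ = g s := by rw [mul_one]
  -- existence of points with small F value
  have hlow : ∀ y : ℝ, ∃ r2 : ℝ, R₀ ≤ r2 ∧ F r2 ≤ y := by
    intro y
    refine ⟨R₀ + max 0 (-y), le_add_of_nonneg_right (le_max_left _ _), ?_⟩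
    set r2 := R₀ + max 0 (-y) with hr2
    have hr2R₀ : R₀ ≤ r2 := le_add_of_nonneg_right (le_max_left _ _)
    have hr2R : Ropt < r2 := lt_of_lt_of_le hR₀ hr2R₀
    have hcmp : ∫ s in R₀..r2, (1:ℝ) ≤ ∫ s in R₀..r2, g s := by
      apply intervalIntegral.integral_mono_on hr2R₀ intervalIntegrable_const
        (hgint R₀ r2 hR₀ hr2R)
      intro x hx
      exact hg1 x (lt_of_lt_of_le hR₀ hx.1)
    have h1 : ∫ s in R₀..r2, (1:ℝ) = max 0 (-y) := by
      rw [intervalIntegral.integral_const]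
      simp [hr2]
    have hsplit := hFsub R₀ r2 hR₀ hr2R
    rw [hFR0] at hsplit
    have hy : -y ≤ max 0 (-y) := le_max_right _ _
    linarith
  -- existence of points with large F value
  have hup : ∀ y : ℝ, ∃ r1 : ℝ, Ropt < r1 ∧ r1 ≤ R₀ ∧ y ≤ F r1 := by
    intro y
    set a := min (Ropt + 1) R₀ with ha
    have haR : Ropt < a := lt_min (by linarith) hR₀
    have haR₀ : a ≤ R₀ := min_le_right _ _
    have ha1 : a ≤ Ropt + 1 := min_le_left _ _
    set L := Real.log (Ropt + 1) ^ 2 + 2 * Real.log (Ropt + 1) with hL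
    have hlogp : 0 < Real.log (Ropt + 1) := Real.log_pos (by linarith)
    have hLpos : 0 < L := by positivity
    set c := Ropt / L with hc
    have hcpos : 0 < c := div_pos h0R hLpos
    -- Lipschitz bound for psi on [Ropt, Ropt+1]
    have hlip : ∀ s ∈ Set.Icc Ropt (Ropt + 1), s * Real.log s ^ 2 - 1 ≤ L * (s - Ropt) := by
      intro s hs
      have hpsiR : Ropt * (Real.log Ropt) ^ 2 = 1 := by
        rw [hroot]; field_simp
      have hb := Convex.norm_image_sub_le_of_norm_hasDerivWithin_le
        (f := fun r : ℝ => r * Real.log r ^ 2)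
        (f' := fun r : ℝ => Real.log r ^ 2 + 2 * Real.log r)
        (s := Set.Icc Ropt (Ropt + 1)) (C := L)
        (fun x hx => (psi_hasDerivAt (lt_of_lt_of_le h0R hx.1)).hasDerivWithinAt)
        ?_ (convex_Icc _ _) (Set.left_mem_Icc.mpr (by linarith)) hs
      · have h1 : s * Real.log s ^ 2 - 1 ≤ |s * Real.log s ^ 2 - Ropt * Real.log Ropt ^ 2| := by
          rw [hpsiR]; exact le_abs_self _
        have h2 : |s - Ropt| = s - Ropt := abs_of_nonneg (by linarith [hs.1])
        rw [Real.norm_eq_abs, Real.norm_eq_abs, h2] at hb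
        linarith
      · intro x hx
        have hx1 : 1 < x := lt_of_lt_of_le hRopt hx.1
        have hlx : 0 < Real.log x := Real.log_pos hx1
        have hlxle : Real.log x ≤ Real.log (Ropt + 1) :=
          Real.log_le_log (lt_trans one_pos hx1) hx.2
        rw [Real.norm_eq_abs, abs_of_nonneg (by positivity)]
        show Real.log x ^ 2 + 2 * Real.log x ≤ L
        have : Real.log x ^ 2 ≤ Real.log (Ropt + 1) ^ 2 := by nlinarith
        rw [hL]; linarith
    -- lower bound for g near Ropt
    have hglb : ∀ s : ℝ, Ropt < s → s ≤ a → c * (s - Ropt)⁻¹ ≤ g s := by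
      intro s hs hsa
      have hs1 : 1 < s := lt_trans hRopt hs
      have hs0 : 0 < s := lt_trans one_pos hs1
      have hls : 0 < Real.log s := Real.log_pos hs1
      have hnum : 0 ≤ s * Real.log s ^ 2 - 1 := (sub_pos.mpr (psi_gt hRopt hroot hs)).le
      have hdenlb : Ropt ≤ s ^ 2 * Real.log s ^ 2 := by
        have h1 : 1 ≤ s * Real.log s ^ 2 := (psi_gt hRopt hroot hs).le
        have : s ^ 2 * Real.log s ^ 2 = s * (s * Real.log s ^ 2) := by ring
        rw [this]
        calc Ropt = Ropt * 1 := (mul_one _).symm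
          _ ≤ s * (s * Real.log s ^ 2) :=
            mul_le_mul hs.le h1 zero_le_one (le_of_lt hs0)
      have hbd : -(f s) ≤ L * (s - Ropt) / Ropt := by
        rw [hfval s hs1, neg_neg]
        exact div_le_div₀ (mul_nonneg hLpos.le (sub_pos.mpr hs).le) (hlip s ⟨hs.le, le_trans hsa ha1⟩) h0R hdenlb
      have hp : 0 < -(f s) := neg_pos.mpr (hfneg s hs)
      have hinv : (L * (s - Ropt) / Ropt)⁻¹ ≤ (-(f s))⁻¹ := inv_anti₀ hp hbd
      have heq : (L * (s - Ropt) / Ropt)⁻¹ = c * (s - Ropt)⁻¹ := by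
        rw [hc]
        have h1 : s - Ropt ≠ 0 := (sub_pos.mpr hs).ne'
        field_simp
      rw [heq] at hinv
      exact hinv
    -- pick r1 close to Ropt
    set E := -(1 + |y - F a|) / c with hE
    have hEneg : E ≤ 0 := by
      apply div_nonpos_of_nonpos_of_nonneg _ hcpos.le
      have := abs_nonneg (y - F a)
      linarith
    set r1 := Ropt + (a - Ropt) * Real.exp E with hr1
    have hexp0 : 0 < Real.exp E := Real.exp_pos _
    have hexp1 : Real.exp E ≤ 1 := Real.exp_le_one_iff.mpr hEneg
    have hr1R : Ropt < r1 := by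
      have : 0 < (a - Ropt) * Real.exp E := mul_pos (sub_pos.mpr haR) hexp0
      linarith
    have hr1a : r1 ≤ a := by
      have : (a - Ropt) * Real.exp E ≤ (a - Ropt) * 1 :=
        mul_le_mul_of_nonneg_left hexp1 (sub_pos.mpr haR).le
      simp only [hr1]; linarith
    have hlog1 : Real.log (r1 - Ropt) = Real.log (a - Ropt) + E := by
      have h1 : r1 - Ropt = (a - Ropt) * Real.exp E := by rw [hr1]; ring
      rw [h1, Real.log_mul (sub_pos.mpr haR).ne' (Real.exp_ne_zero _), Real.log_exp]
    -- comparison integral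
    have hderiv2 : ∀ s ∈ Set.uIcc r1 a,
        HasDerivAt (fun u => c * Real.log (u - Ropt)) (c * (s - Ropt)⁻¹) s := by
      intro s hs
      rw [Set.uIcc_of_le hr1a] at hs
      have hsR : Ropt < s := lt_of_lt_of_le hr1R hs.1
      have h1 : HasDerivAt (fun u : ℝ => u - Ropt) 1 s := (hasDerivAt_id s).sub_const Ropt
      have h2 := (h1.log (sub_pos.mpr hsR).ne').const_mul c
      convert h2 using 1
      exacts [rfl, rfl, by rw [one_div]]
    have hcont2 : ContinuousOn (fun s : ℝ => c * (s - Ropt)⁻¹) (Set.uIcc r1 a) := by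
      rw [Set.uIcc_of_le hr1a]
      intro s hs
      have hsR : Ropt < s := lt_of_lt_of_le hr1R hs.1
      exact (continuousAt_const.mul
        (((continuousAt_id.sub continuousAt_const)).inv₀ (sub_pos.mpr hsR).ne')).continuousWithinAt
    have hint2 : IntervalIntegrable (fun s : ℝ => c * (s - Ropt)⁻¹) MeasureTheory.volume r1 a :=
      hcont2.intervalIntegrable
    have hintc : ∫ s in r1..a, c * (s - Ropt)⁻¹
        = c * Real.log (a - Ropt) - c * Real.log (r1 - Ropt) :=
      intervalIntegral.integral_eq_sub_of_hasDerivAt hderiv2 hint2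
    have hval : ∫ s in r1..a, c * (s - Ropt)⁻¹ = 1 + |y - F a| := by
      rw [hintc, hlog1]
      have : c * E = -(1 + |y - F a|) := by
        rw [hE]; field_simp
      have h2 : c * Real.log (a - Ropt) - c * (Real.log (a - Ropt) + E) = -(c * E) := by ring
      rw [h2, this, neg_neg]
    have hcmp : ∫ s in r1..a, c * (s - Ropt)⁻¹ ≤ ∫ s in r1..a, g s := by
      apply intervalIntegral.integral_mono_on hr1a hint2 (hgint r1 a hr1R haR)
      intro x hx
      exact hglb x (lt_of_lt_of_le hr1R hx.1) hx.2
    have hsplit := hFsub r1 a hr1R haR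
    have habs : y - F a ≤ |y - F a| := le_abs_self _
    refine ⟨r1, hr1R, le_trans hr1a haR₀, ?_⟩
    linarith
  -- surjectivity of F : (Ropt, ∞) → ℝ
  have hsurj : ∀ y : ℝ, ∃ r : ℝ, Ropt < r ∧ F r = y := by
    intro y
    obtain ⟨r1, hr1R, hr1R₀, hy1⟩ := hup y
    obtain ⟨r2, hr2R₀, hy2⟩ := hlow y
    have hle : r1 ≤ r2 := le_trans hr1R₀ hr2R₀
    have hcontF : ContinuousOn F (Set.Icc r1 r2) := fun x hx =>
      (hFderiv x (lt_of_lt_of_le hr1R hx.1)).continuousAt.continuousWithinAt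
    have := intermediate_value_Icc' hle hcontF
    have hy : y ∈ Set.Icc (F r2) (F r1) := ⟨hy2, hy1⟩
    obtain ⟨r, hrmem, hFr⟩ := this hy
    exact ⟨r, lt_of_lt_of_le hr1R hrmem.1, hFr⟩
  -- define R as the inverse of F
  set R : ℝ → ℝ := fun t => Classical.choose (hsurj t) with hRdef
  have hRmem : ∀ t : ℝ, Ropt < R t := fun t => (Classical.choose_spec (hsurj t)).1
  have hFRt : ∀ t : ℝ, F (R t) = t := fun t => (Classical.choose_spec (hsurj t)).2
  have hRanti : StrictAnti R := by
    intro t1 t2 h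
    by_contra hcon
    push_neg at hcon
    have := hAnti _ _ (hRmem t1) (hRmem t2) hcon
    rw [hFRt, hFRt] at this
    linarith
  have hR0 : R 0 = R₀ := by
    have h1 : F (R 0) = F R₀ := by rw [hFRt, hFR0]
    exact hFanti.injOn (hRmem 0) (Set.mem_Ioi.mpr hR₀) h1
  -- continuity of R
  have hcontR : ∀ t : ℝ, ContinuousAt R t := by
    intro t
    rw [ContinuousAt, Metric.tendsto_nhds]
    intro ε hε
    set δ1 := min ε ((R t - Ropt) / 2) with hδ1def
    have hδ1 : 0 < δ1 := lt_min hε (by linarith [hRmem t])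
    have hδ1ε : δ1 ≤ ε := min_le_left _ _
    have hδ1half : δ1 ≤ (R t - Ropt) / 2 := min_le_right _ _
    set p := R t - δ1 with hp
    set q := R t + ε with hq
    have hpR : Ropt < p := by
      have := hRmem t
      simp only [hp]; linarith
    have hqR : Ropt < q := by
      have := hRmem t
      simp only [hq]; linarith
    have h1 : F q < t := by
      have := hFanti (Set.mem_Ioi.mpr (hRmem t)) (Set.mem_Ioi.mpr hqR)
        (by simp only [hq]; linarith)
      rwa [hFRt] at this
    have h2 : t < F p := by
      have := hFanti (Set.mem_Ioi.mpr hpR) (Set.mem_Ioi.mpr (hRmem t))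
        (by simp only [hp]; linarith)
      rwa [hFRt] at this
    filter_upwards [Ioo_mem_nhds h1 h2] with s hs
    have hlt1 : R s < q := by
      by_contra hcon
      push_neg at hcon
      have := hAnti q (R s) hqR (hRmem s) hcon
      rw [hFRt] at this
      exact absurd hs.1 (by linarith)
    have hlt2 : p < R s := by
      by_contra hcon
      push_neg at hcon
      have := hAnti (R s) p (hRmem s) hpR hcon
      rw [hFRt] at this
      exact absurd hs.2 (by linarith)
    rw [Real.dist_eq, abs_lt]
    constructor
    · simp only [hp] at hlt2; linarith
    · simp only [hq] at hlt1; linarith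
  -- R solves the ODE
  have hDeriv : ∀ t : ℝ, HasDerivAt R (f (R t)) t := by
    intro t
    have h := HasDerivAt.of_local_left_inverse (hcontR t) (hFderiv (R t) (hRmem t))
      (neg_ne_zero.mpr (hgpos _ (hRmem t)).ne')
      (Filter.Eventually.of_forall hFRt)
    have heq : (-(g (R t)))⁻¹ = f (R t) := by
      rw [hgdef]
      simp [inv_neg]
    rwa [heq] at h
  -- convergence to Ropt
  have htend : Filter.Tendsto R Filter.atTop (nhds Ropt) := by
    rw [tendsto_order]
    constructor
    · intro b hb
      exact Filter.Eventually.of_forall fun t => lt_trans hb (hRmem t)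
    · intro b hb
      set cpt := min b (Ropt + 1) with hcpt
      have hcR : Ropt < cpt := lt_min hb (by linarith)
      filter_upwards [Filter.eventually_gt_atTop (F cpt)] with t ht
      have hlt : R t < cpt := by
        by_contra hcon
        push_neg at hcon
        have := hAnti cpt (R t) hcR (hRmem t) hcon
        rw [hFRt] at this
        linarith
      exact lt_of_lt_of_le hlt (min_le_left _ _)
  refine ⟨R, hR0, fun t _ => hDeriv t, fun a _ b _ h => hRanti h, fun t ht => ⟨hRmem t, ?_⟩, htend⟩
  rw [← hR0]
  exact hRanti.antitone ht
end

section
/- Let R_opt be the unique real number R > 1 with (log R)^2 = 1/R, let f(R) = −1/R + 1/(R^2·(log R)^2), and let 1 < R_0 < R_opt. Then there exists a function R : ℝ → ℝ with R(0) = R_0 such that for every t ≥ 0 the function R is differentiable at t with derivative f(R(t)); moreover R is strictly increasing on [0, ∞), satisfies R_0 ≤ R(t) < R_opt for all t ≥ 0, and R(t) converges to R_opt as t → ∞. -/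
set_option maxHeartbeats 1000000

open Set Filter MeasureTheory intervalIntegral

/-- For `R_opt` the unique root `> 1` of `(log R)^2 = 1/R`,
`f(R) = -1/R + 1/(R^2 (log R)^2)`, and an initial radius `1 < R_0 < R_opt`, there
is a global solution `R(t)` of the ODE `R' = f(R)`, `R(0) = R_0`, which is strictly
increasing on `[0, ∞)`, stays in `[R_0, R_opt)`, and converges to `R_opt` as
`t → ∞`. -/
theorem radial_flow_from_below (Ropt : ℝ) (hRopt : 1 < Ropt)
    (hroot : (Real.log Ropt) ^ 2 = 1 / Ropt)
    (f : ℝ → ℝ) (hf : ∀ R : ℝ, f R = -1 / R + 1 / (R ^ 2 * (Real.log R) ^ 2))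
    (R₀ : ℝ) (hR₀_gt : 1 < R₀) (hR₀_lt : R₀ < Ropt) :
    ∃ R : ℝ → ℝ, R 0 = R₀ ∧
      (∀ t : ℝ, 0 ≤ t → HasDerivAt R (f (R t)) t) ∧
      StrictMonoOn R (Set.Ici (0 : ℝ)) ∧
      (∀ t : ℝ, 0 ≤ t → R₀ ≤ R t ∧ R t < Ropt) ∧
      Filter.Tendsto R Filter.atTop (nhds Ropt) := by
  classical
  have hfun : f = fun R : ℝ => -1 / R + 1 / (R ^ 2 * (Real.log R) ^ 2) := funext hf
  set a : ℝ := (1 + R₀) / 2 with ha_def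
  have ha1 : 1 < a := by rw [ha_def]; linarith
  have haR : a < R₀ := by rw [ha_def]; linarith
  have hab : a < Ropt := haR.trans hR₀_lt
  have hb0 : (0 : ℝ) < Ropt := by linarith
  have hlogb : 0 < Real.log Ropt := Real.log_pos hRopt
  have hloga : 0 < Real.log a := Real.log_pos ha1
  -- derivative of the auxiliary function h r = r * (log r)^2
  have hDh : ∀ x : ℝ, 0 < x →
      HasDerivAt (fun r : ℝ => r * Real.log r ^ 2) (Real.log x ^ 2 + 2 * Real.log x) x := by
    intro x hx
    have h1 := (hasDerivAt_id x).mul ((Real.hasDerivAt_log hx.ne').pow 2)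
    refine h1.congr_deriv ?_
    simp only [id, one_mul, Pi.pow_apply, Nat.cast_ofNat]
    field_simp
    norm_num
    ring
  have hmono : StrictMonoOn (fun r : ℝ => r * Real.log r ^ 2) (Set.Ici 1) := by
    apply strictMonoOn_of_deriv_pos (convex_Ici 1)
    · intro x hx
      have hx0 : (0 : ℝ) < x := lt_of_lt_of_le one_pos hx
      exact (hDh x hx0).continuousAt.continuousWithinAt
    · intro x hx
      rw [interior_Ici] at hx
      rw [(hDh x (lt_trans one_pos hx)).deriv]
      have hl := Real.log_pos hx
      nlinarith
  have hhb : Ropt * Real.log Ropt ^ 2 = 1 := by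
    rw [hroot]; field_simp
  -- positivity of f on (1, Ropt)
  have hfpos : ∀ r : ℝ, 1 < r → r < Ropt → 0 < f r := by
    intro r hr hrb
    have hr0 : (0 : ℝ) < r := lt_trans one_pos hr
    have hl : Real.log r ≠ 0 := (Real.log_pos hr).ne'
    have hnum : r * Real.log r ^ 2 < 1 := by
      have := hmono (Set.mem_Ici.2 hr.le) (Set.mem_Ici.2 hRopt.le) hrb
      simp only [] at this
      linarith [hhb ▸ this]
    have heq : f r = (1 - r * Real.log r ^ 2) / (r ^ 2 * Real.log r ^ 2) := by
      rw [hf]; field_simp; ring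
    rw [heq]
    apply div_pos (by linarith)
    positivity
  -- continuity of f away from 1
  have hfcont : ∀ r : ℝ, 1 < r → ContinuousAt f r := by
    intro r hr
    have hr0 : (r : ℝ) ≠ 0 := (lt_trans one_pos hr).ne'
    have hl : Real.log r ≠ 0 := (Real.log_pos hr).ne'
    rw [hfun]
    apply ContinuousAt.add
    · exact continuousAt_const.div continuousAt_id hr0
    · apply continuousAt_const.div
      · exact (continuousAt_id.pow 2).mul ((Real.continuousAt_log hr0).pow 2)
      · positivity
  -- upper Lipschitz-type bound near the root
  set M : ℝ := (Real.log Ropt ^ 2 + 2 * Real.log Ropt) / (a ^ 2 * Real.log a ^ 2) with hM_def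
  have hMpos : 0 < M := by
    apply div_pos (by nlinarith) (by positivity)
  have hfub : ∀ s : ℝ, a ≤ s → s < Ropt → f s ≤ M * (Ropt - s) := by
    intro s hs hsb
    have hs1 : 1 < s := lt_of_lt_of_le ha1 hs
    have hs0 : (0 : ℝ) < s := lt_trans one_pos hs1
    have hlogs : 0 < Real.log s := Real.log_pos hs1
    obtain ⟨c, hc, hceq⟩ := exists_hasDerivAt_eq_slope (fun r : ℝ => r * Real.log r ^ 2)
      (fun x : ℝ => Real.log x ^ 2 + 2 * Real.log x) hsb
      (fun x hx => (hDh x (by have := hx.1; linarith)).continuousAt.continuousWithinAt)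
      (fun x hx => hDh x (lt_trans hs0 hx.1))
    · have hc1 : 1 < c := hs1.trans hc.1
      have hlc : 0 < Real.log c := Real.log_pos hc1
      have hcb : Real.log c ≤ Real.log Ropt := Real.log_le_log (by linarith) hc.2.le
      have h2 : (Real.log c ^ 2 + 2 * Real.log c) * (Ropt - s)
          = Ropt * Real.log Ropt ^ 2 - s * Real.log s ^ 2 := by
        rw [eq_comm, ← div_eq_iff (by linarith : Ropt - s ≠ 0)]
        simpa using hceq.symm
      have hslope : 1 - s * Real.log s ^ 2
          ≤ (Real.log Ropt ^ 2 + 2 * Real.log Ropt) * (Ropt - s) := by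
        have h1 : Real.log c ^ 2 + 2 * Real.log c ≤ Real.log Ropt ^ 2 + 2 * Real.log Ropt := by
          nlinarith
        nlinarith [hhb]
      have hden : a ^ 2 * Real.log a ^ 2 ≤ s ^ 2 * Real.log s ^ 2 := by
        have hls : Real.log a ≤ Real.log s := Real.log_le_log (by linarith) hs
        have e1 : a ^ 2 ≤ s ^ 2 := by nlinarith
        have e2 : Real.log a ^ 2 ≤ Real.log s ^ 2 := by nlinarith
        exact mul_le_mul e1 e2 (by positivity) (by positivity)
      have hfs : f s = (1 - s * Real.log s ^ 2) / (s ^ 2 * Real.log s ^ 2) := by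
        rw [hf]; field_simp; ring
      rw [hfs, hM_def, div_mul_eq_mul_div]
      exact div_le_div₀ (by nlinarith) hslope (by positivity) hden
  -- measurability
  have hmeas : Measurable fun s : ℝ => (f s)⁻¹ := by
    rw [hfun]
    exact ((measurable_const.div measurable_id).add
      (measurable_const.div ((measurable_id.pow_const 2).mul
        (Real.measurable_log.pow_const 2)))).inv
  -- the time function T
  set T : ℝ → ℝ := fun r => ∫ s in a..r, (f s)⁻¹ with hT_def
  have hintcont : ∀ r ∈ Set.Ico a Ropt, ContinuousOn (fun s => (f s)⁻¹) (Set.Icc a r) := by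
    intro r hr s hs
    have hs1 : 1 < s := lt_of_lt_of_le ha1 hs.1
    have hsb : s < Ropt := lt_of_le_of_lt hs.2 hr.2
    exact ((hfcont s hs1).inv₀ (hfpos s hs1 hsb).ne').continuousWithinAt
  have hint : ∀ r ∈ Set.Ico a Ropt,
      IntervalIntegrable (fun s => (f s)⁻¹) volume a r :=
    fun r hr => (hintcont r hr).intervalIntegrable_of_Icc hr.1
  have hTderiv : ∀ r ∈ Set.Ico a Ropt, HasDerivAt T (f r)⁻¹ r := by
    intro r hr
    exact intervalIntegral.integral_hasDerivAt_right (hint r hr)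
      (hmeas.stronglyMeasurable.stronglyMeasurableAtFilter)
      ((hfcont r (lt_of_lt_of_le ha1 hr.1)).inv₀ (hfpos r (lt_of_lt_of_le ha1 hr.1) hr.2).ne')
  have hTcont : ContinuousOn T (Set.Ico a Ropt) :=
    fun r hr => (hTderiv r hr).continuousAt.continuousWithinAt
  have hTmono : StrictMonoOn T (Set.Ico a Ropt) := by
    apply strictMonoOn_of_deriv_pos (convex_Ico a Ropt) hTcont
    intro x hx
    rw [interior_Ico] at hx
    rw [(hTderiv x (Set.Ioo_subset_Ico_self hx)).deriv]
    exact inv_pos.2 (hfpos x (lt_of_lt_of_le ha1 hx.1.le) hx.2)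
  have haMem : a ∈ Set.Ico a Ropt := ⟨le_refl a, hab⟩
  have hTa : T a = 0 := intervalIntegral.integral_same
  have hTnonneg : ∀ r ∈ Set.Ico a Ropt, 0 ≤ T r := by
    intro r hr
    rw [← hTa]
    exact hTmono.monotoneOn haMem hr hr.1
  -- surjectivity of T onto [0, ∞)
  have hsurj : ∀ u : ℝ, 0 ≤ u → ∃ r ∈ Set.Ico a Ropt, T r = u := by
    intro u hu
    set r₁ : ℝ := Ropt - (Ropt - a) * Real.exp (-(M * u)) with hr₁def
    have he1 : Real.exp (-(M * u)) ≤ 1 := Real.exp_le_one_iff.2 (by nlinarith)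
    have he0 : 0 < Real.exp (-(M * u)) := Real.exp_pos _
    have hr₁a : a ≤ r₁ := by rw [hr₁def]; nlinarith
    have hr₁b : r₁ < Ropt := by rw [hr₁def]; nlinarith
    have hr₁mem : r₁ ∈ Set.Ico a Ropt := ⟨hr₁a, hr₁b⟩
    have key : u ≤ T r₁ := by
      have hG : ∀ s ∈ Set.uIcc a r₁,
          HasDerivAt (fun s => -(M⁻¹ * Real.log (Ropt - s))) (M * (Ropt - s))⁻¹ s := by
        intro s hs
        rw [Set.uIcc_of_le hr₁a] at hs
        have hbs : 0 < Ropt - s := by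
          have := hs.2; linarith
        have h1 : HasDerivAt (fun s : ℝ => Ropt - s) (0 - 1) s :=
          (hasDerivAt_const s Ropt).sub (hasDerivAt_id s)
        have h2 := (Real.hasDerivAt_log hbs.ne').comp s h1
        have h3 := h2.const_mul (-(M⁻¹ : ℝ))
        have h5 : (M * (Ropt - s))⁻¹ = -(M⁻¹) * ((Ropt - s)⁻¹ * (0 - 1)) := by
          rw [mul_inv]; ring
        rw [h5]
        simpa [Function.comp, neg_mul] using h3
      have hGint : IntervalIntegrable (fun s => (M * (Ropt - s))⁻¹) volume a r₁ := by
        apply ContinuousOn.intervalIntegrable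
        rw [Set.uIcc_of_le hr₁a]
        intro s hs
        have hbs : 0 < Ropt - s := by have := hs.2; linarith
        exact (((continuous_const.mul (continuous_const.sub continuous_id)).continuousAt).inv₀
          (by positivity : (M * (Ropt - s)) ≠ 0)).continuousWithinAt
      have hGval : (∫ s in a..r₁, (M * (Ropt - s))⁻¹) = u := by
        rw [intervalIntegral.integral_eq_sub_of_hasDerivAt hG hGint]
        have hrr : Ropt - r₁ = (Ropt - a) * Real.exp (-(M * u)) := by rw [hr₁def]; ring
        rw [hrr, Real.log_mul (by linarith : Ropt - a ≠ 0) (Real.exp_ne_zero _), Real.log_exp]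
        field_simp
        ring
      have hmono2 : (∫ s in a..r₁, (M * (Ropt - s))⁻¹) ≤ ∫ s in a..r₁, (f s)⁻¹ := by
        apply intervalIntegral.integral_mono_on hr₁a hGint (hint r₁ hr₁mem)
        intro s hs
        have hs1 : 1 < s := lt_of_lt_of_le ha1 hs.1
        have hsb : s < Ropt := lt_of_le_of_lt hs.2 hr₁b
        exact inv_anti₀ (hfpos s hs1 hsb) (hfub s hs.1 hsb)
      rw [hGval] at hmono2
      exact hmono2
    have hsub : Set.Icc (T a) (T r₁) ⊆ T '' Set.Icc a r₁ := by
      apply intermediate_value_Icc hr₁a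
      exact hTcont.mono (fun x hx => ⟨hx.1, lt_of_le_of_lt hx.2 hr₁b⟩)
    obtain ⟨r, hrmem, hTr⟩ := hsub ⟨by rw [hTa]; exact hu, key⟩
    exact ⟨r, ⟨hrmem.1, lt_of_le_of_lt hrmem.2 hr₁b⟩, hTr⟩
  -- the inverse function W
  set W : ℝ → ℝ := Function.invFunOn T (Set.Ico a Ropt) with hW_def
  have hTW : ∀ u : ℝ, 0 ≤ u → T (W u) = u := fun u hu => Function.invFunOn_eq (hsurj u hu)
  have hWmem : ∀ u : ℝ, 0 ≤ u → W u ∈ Set.Ico a Ropt := fun u hu => Function.invFunOn_mem (hsurj u hu)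
  have hrefl : ∀ u : ℝ, 0 ≤ u → ∀ r ∈ Set.Ico a Ropt, T r < u → r < W u := by
    intro u hu r hr hTru
    by_contra hle
    push_neg at hle
    have h := hTmono.monotoneOn (hWmem u hu) hr hle
    rw [hTW u hu] at h
    linarith
  have hrefl' : ∀ u : ℝ, 0 ≤ u → ∀ r ∈ Set.Ico a Ropt, u < T r → W u < r := by
    intro u hu r hr hTru
    by_contra hle
    push_neg at hle
    have h := hTmono.monotoneOn hr (hWmem u hu) hle
    rw [hTW u hu] at h
    linarith
  have hWeq : ∀ u : ℝ, 0 ≤ u → ∀ r ∈ Set.Ico a Ropt, T r = u → W u = r := by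
    intro u hu r hr hTr
    exact hTmono.injOn (hWmem u hu) hr (by rw [hTW u hu, hTr])
  have hWlt : ∀ u v : ℝ, 0 ≤ u → 0 ≤ v → u < v → W u < W v := by
    intro u v hu hv huv
    exact hrefl v hv _ (hWmem u hu) (by rw [hTW u hu]; exact huv)
  have hWle : ∀ u v : ℝ, 0 ≤ u → 0 ≤ v → u ≤ v → W u ≤ W v := by
    intro u v hu hv huv
    rcases eq_or_lt_of_le huv with h | h
    · rw [h]
    · exact (hWlt u v hu hv h).le
  -- continuity of W on (0, ∞)
  have hWcont : ∀ u₀ : ℝ, 0 < u₀ → ContinuousAt W u₀ := by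
    intro u₀ hu₀
    rw [Metric.continuousAt_iff]
    intro ε hε
    have hmem₀ := hWmem u₀ hu₀.le
    have hTr₀ : T (W u₀) = u₀ := hTW u₀ hu₀.le
    set r₀ := W u₀ with hr₀def
    have har₀ : a < r₀ := by
      rcases lt_or_eq_of_le hmem₀.1 with h | h
      · exact h
      · exfalso; rw [← h, hTa] at hTr₀; linarith
    set r₁ := max a (r₀ - ε / 2) with hr₁def
    have hr₁mem : r₁ ∈ Set.Ico a Ropt :=
      ⟨le_max_left _ _, max_lt hab (by linarith [hmem₀.2])⟩
    have hr₁lt : r₁ < r₀ := max_lt har₀ (by linarith)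
    set r₂ := (r₀ + min Ropt (r₀ + ε / 2)) / 2 with hr₂def
    have hminr : r₀ < min Ropt (r₀ + ε / 2) := lt_min hmem₀.2 (by linarith)
    have hr₂gt : r₀ < r₂ := by rw [hr₂def]; linarith
    have hr₂b : r₂ < Ropt := by
      have h := min_le_left Ropt (r₀ + ε / 2)
      rw [hr₂def]; have := hmem₀.2; linarith
    have hr₂mem : r₂ ∈ Set.Ico a Ropt := ⟨le_trans hmem₀.1 hr₂gt.le, hr₂b⟩
    have hr₂ε : r₂ < r₀ + ε := by
      have h := min_le_right Ropt (r₀ + ε / 2)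
      rw [hr₂def]; linarith
    have hT₁ : T r₁ < u₀ := by rw [← hTr₀]; exact hTmono hr₁mem hmem₀ hr₁lt
    have hT₂ : u₀ < T r₂ := by rw [← hTr₀]; exact hTmono hmem₀ hr₂mem hr₂gt
    refine ⟨min (u₀ - T r₁) (T r₂ - u₀), lt_min (by linarith) (by linarith), ?_⟩
    intro u hdist
    rw [Real.dist_eq] at hdist ⊢
    have habs := abs_lt.1 hdist
    have hd1 := min_le_left (u₀ - T r₁) (T r₂ - u₀)
    have hd2 := min_le_right (u₀ - T r₁) (T r₂ - u₀)
    have h1 : T r₁ < u := by linarith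
    have h2 : u < T r₂ := by linarith
    have hu0 : 0 ≤ u := le_trans (hTnonneg r₁ hr₁mem) h1.le
    have hlow : r₁ < W u := hrefl u hu0 r₁ hr₁mem h1
    have hhigh : W u < r₂ := hrefl' u hu0 r₂ hr₂mem h2
    have hr₁ge : r₀ - ε / 2 ≤ r₁ := le_max_right _ _
    rw [abs_lt]
    constructor <;> [skip; skip] <;> linarith
  -- the shift
  set τ := T R₀ with hτdef
  have hR₀mem : R₀ ∈ Set.Ico a Ropt := ⟨haR.le, hR₀_lt⟩
  have hτpos : 0 < τ := by
    rw [hτdef, ← hTa]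
    exact hTmono haMem hR₀mem haR
  have hWτ : W τ = R₀ := hWeq τ hτpos.le R₀ hR₀mem rfl
  refine ⟨fun t => W (t + τ), ?_, ?_, ?_, ?_, ?_⟩
  · simp only [zero_add]
    exact hWτ
  · intro t ht
    have hu : 0 < t + τ := by linarith
    have hmem := hWmem _ hu.le
    have hW1 : 1 < W (t + τ) := lt_of_lt_of_le ha1 hmem.1
    have hfW : 0 < f (W (t + τ)) := hfpos _ hW1 hmem.2
    have hWder : HasDerivAt W (f (W (t + τ))) (t + τ) := by
      have h1 : HasDerivAt T (f (W (t + τ)))⁻¹ (W (t + τ)) := hTderiv _ hmem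
      have h2 : ∀ᶠ y in nhds (t + τ), T (W y) = y := by
        filter_upwards [Ioi_mem_nhds hu] with y hy
        exact hTW y (le_of_lt hy)
      have h3 := HasDerivAt.of_local_left_inverse (hWcont _ hu) h1 (inv_ne_zero hfW.ne') h2
      rwa [inv_inv] at h3
    have hshift : HasDerivAt (fun t' : ℝ => t' + τ) 1 t := (hasDerivAt_id t).add_const τ
    have h4 := hWder.comp t hshift
    rw [mul_one] at h4
    exact h4
  · intro s hs t ht hst
    have hs' : (0:ℝ) ≤ s + τ := by have := Set.mem_Ici.1 hs; linarith
    have ht' : (0:ℝ) ≤ t + τ := by have := Set.mem_Ici.1 ht; linarith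
    exact hWlt (s + τ) (t + τ) hs' ht' (by linarith)
  · intro t ht
    have hu : (0:ℝ) ≤ t + τ := by linarith
    refine ⟨?_, (hWmem _ hu).2⟩
    have h := hWle τ (t + τ) hτpos.le hu (by linarith)
    rwa [hWτ] at h
  · rw [tendsto_order]
    constructor
    · intro c hc
      set r := max R₀ ((c + Ropt) / 2) with hrdef
      have hrmem : r ∈ Set.Ico a Ropt :=
        ⟨le_trans haR.le (le_max_left _ _), max_lt hR₀_lt (by linarith)⟩
      have hrc : c < r := lt_of_lt_of_le (by linarith : c < (c + Ropt) / 2) (le_max_right _ _)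
      have hTr0 : 0 ≤ T r := hTnonneg r hrmem
      filter_upwards [Filter.eventually_ge_atTop (T r - τ)] with t ht
      have h1 : T r ≤ t + τ := by linarith
      have h2 : W (T r) ≤ W (t + τ) := hWle _ _ hTr0 (le_trans hTr0 h1) h1
      rw [hWeq (T r) hTr0 r hrmem rfl] at h2
      exact lt_of_lt_of_le hrc h2
    · intro c hc
      filter_upwards [Filter.eventually_ge_atTop (0:ℝ)] with t ht
      have h := (hWmem (t + τ) (by linarith)).2
      show W (t + τ) < c
      linarith
end
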